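/- Let D and D' be chord diagrams with a bijection φ between their chords that preserves linking (i.e., φ induces an isomorphism of intersection graphs). Then for any subset S of chords of D, smoothing all chords of S in D and all chords of φ(S) in D' yields 1-manifolds with the same number of circle components. -/

import Mathlib

/-- Two chords `c = {c.1, c.2}` and `d = {d.1, d.2}` (each written with smaller
endpoint first) of a chord diagram are *linked* (interleaved) iff the endpoints
of one separate the endpoints of the other on the circle. -/
def Linked (c d : ℕ × ℕ) : Prop :=
  (c.1 < d.1 ∧ d.1 < c.2 ∧ c.2 < d.2) ∨ (d.1 < c.1 ∧ c.1 < d.2 ∧ d.2 < c.2)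

instance : DecidableRel Linked := fun c d => by unfold Linked; infer_instance

/-- A chord diagram on the `N` points `0, …, N-1` of a circle: a finite set of
chords, each recorded as an ordered pair (smaller endpoint, larger endpoint),
forming a perfect matching of `{0, …, N-1}`. -/
structure IsChordDiagram (N : ℕ) (D : Finset (ℕ × ℕ)) : Prop where
  lt : ∀ c ∈ D, c.1 < c.2 ∧ c.2 < N
  matching : ∀ x < N, ∃! c, c ∈ D ∧ (c.1 = x ∨ c.2 = x)

/-- Number of cycles (orbits) of a permutation of a finite type, counting fixed
points as (trivial) cycles: this is the number of circle components of the
curve encoded by the permutation. -/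
def numCycles {α : Type*} [Fintype α] [DecidableEq α] (π : Equiv.Perm α) : ℕ :=
  π.cycleType.card + (Finset.univ.filter fun x => π x = x).card

/-- The chords of a perfect matching `m` (a fixed-point-free involution of the
`N` points of the circle), each represented by its smaller endpoint. -/
abbrev ChordIdx (N : ℕ) (m : Equiv.Perm (Fin N)) := {x : Fin N // (x : ℕ) < ((m x : Fin N) : ℕ)}

/-- Two chords of the matching `m` are linked iff their endpoint pairs
interleave on the circle. -/
def LinkedChord (N : ℕ) (m : Equiv.Perm (Fin N)) (i j : ChordIdx N m) : Prop :=
  Linked (((i : Fin N) : ℕ), ((m (i : Fin N) : Fin N) : ℕ))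
         (((j : Fin N) : ℕ), ((m (j : Fin N) : Fin N) : ℕ))

instance (N : ℕ) (m : Equiv.Perm (Fin N)) : DecidableRel (LinkedChord N m) :=
  fun i j => by unfold LinkedChord; infer_instance

/-- The permutation whose orbits are the circle components of the curve
obtained from the chord diagram (with matching `m`) by smoothing exactly the
chords in the set `S`: the cyclic successor composed with the matching
restricted to the endpoints of chords of `S`. -/
def smoothSet (N : ℕ) [NeZero N] (m : Equiv.Perm (Fin N)) (hinv : ∀ x, m (m x) = x)
    (S : Finset (ChordIdx N m)) : Equiv.Perm (Fin N) :=
  Equiv.addLeft 1 * Function.Involutive.toPerm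
    (fun x => if ∃ i ∈ S, (i : Fin N) = x ∨ m (i : Fin N) = x then m x else x)
    (by
      intro x
      dsimp only
      by_cases h : ∃ i ∈ S, (i : Fin N) = x ∨ m (i : Fin N) = x
      · have h2 : ∃ i ∈ S, (i : Fin N) = m x ∨ m (i : Fin N) = m x := by
          obtain ⟨i, hi, hcase⟩ := h
          refine ⟨i, hi, ?_⟩
          rcases hcase with e | e
          · exact Or.inr (by rw [e])
          · exact Or.inl (by rw [← e, hinv])
        rw [if_pos h, if_pos h2, hinv]
      · rw [if_neg h, if_neg h])

open Equiv Equiv.Perm Finset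

lemma fintypeCard_indep {T : Type*} (i1 i2 : Fintype T) :
    @Fintype.card T i1 = @Fintype.card T i2 := by
  cases Subsingleton.elim i1 i2; rfl

section OrbitCount
variable {α : Type*} [Fintype α] [DecidableEq α]

def orbitSetoid (π : Equiv.Perm α) : Setoid α :=
  ⟨π.SameCycle, ⟨SameCycle.refl π, SameCycle.symm, SameCycle.trans⟩⟩

instance orbitQFintype (π : Equiv.Perm α) : Fintype (Quotient (orbitSetoid π)) :=
  @Quotient.fintype α _ (orbitSetoid π) (fun x y => (inferInstance : Decidable (π.SameCycle x y)))

instance orbitQDecEq (π : Equiv.Perm α) : DecidableEq (Quotient (orbitSetoid π)) :=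
  @Quotient.decidableEq α (orbitSetoid π) (fun x y => (inferInstance : Decidable (π.SameCycle x y)))

def rep (π : Equiv.Perm α) (x : α) : {c // c ∈ π.cycleFactorsFinset} ⊕ {x // π x = x} :=
  if h : π x = x then Sum.inr ⟨x, h⟩ else
    Sum.inl ⟨π.cycleOf x, cycleOf_mem_cycleFactorsFinset_iff.2 (mem_support.2 h)⟩

lemma rep_const (π : Equiv.Perm α) {x y : α} (hxy : π.SameCycle x y) : rep π x = rep π y := by
  unfold rep
  by_cases hx : π x = x
  · have hyx : y = x := by
      obtain ⟨i, hi⟩ := hxy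
      rw [← hi, zpow_apply_eq_self_of_apply_eq_self hx]
    subst hyx; rfl
  · have hy : ¬ π y = y := by
      intro hy
      obtain ⟨i, hi⟩ := hxy.symm
      have hxe : x = y := by rw [← hi, zpow_apply_eq_self_of_apply_eq_self hy]
      exact hx (by rw [hxe]; exact hy)
    rw [dif_neg hx, dif_neg hy]
    exact congrArg Sum.inl (Subtype.ext hxy.cycleOf_eq)

lemma card_orbits (π : Equiv.Perm α) :
    Fintype.card (Quotient (orbitSetoid π)) = numCycles π := by
  have e : Quotient (orbitSetoid π) ≃ ({c // c ∈ π.cycleFactorsFinset} ⊕ {x // π x = x}) := by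
    refine Equiv.ofBijective (Quotient.lift (rep π) (fun x y h => rep_const π h)) ⟨?_, ?_⟩
    · rintro ⟨x⟩ ⟨y⟩ h
      have h' : rep π x = rep π y := h
      unfold rep at h'
      by_cases hx : π x = x <;> by_cases hy : π y = y
      · rw [dif_pos hx, dif_pos hy] at h'
        injection h' with h''
        have : x = y := congrArg Subtype.val h''
        exact congrArg _ this
      · rw [dif_pos hx, dif_neg hy] at h'; exact absurd h' (by simp)
      · rw [dif_neg hx, dif_pos hy] at h'; exact absurd h' (by simp)
      · rw [dif_neg hx, dif_neg hy] at h'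
        apply Quotient.sound
        injection h' with h''
        have h2 : π.cycleOf x = π.cycleOf y := Subtype.mk_eq_mk.1 h''
        have hyy : y ∈ (π.cycleOf x).support := by
          rw [h2, mem_support_cycleOf_iff]
          exact ⟨SameCycle.refl _ _, mem_support.2 hy⟩
        exact (mem_support_cycleOf_iff.1 hyy).1
    · rintro (⟨c, hc⟩ | ⟨x, hx⟩)
      · obtain ⟨x, hx⟩ := (mem_cycleFactorsFinset_iff.1 hc).1.nonempty_support
        have hcx : c = π.cycleOf x := cycle_is_cycleOf hx hc
        have hxs : ¬ π x = x := by
          rw [hcx, mem_support_cycleOf_iff] at hx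
          exact mem_support.1 hx.2
        refine ⟨Quotient.mk _ x, ?_⟩
        show rep π x = _
        unfold rep
        rw [dif_neg hxs]
        exact congrArg Sum.inl (Subtype.ext hcx.symm)
      · exact ⟨Quotient.mk _ x, by show rep π x = _; unfold rep; rw [dif_pos hx]⟩
  rw [Fintype.card_congr e, Fintype.card_sum]
  unfold numCycles
  congr 1
  · rw [cycleType_def, Multiset.card_map, Fintype.card_coe]
    rfl
  · rw [Fintype.card_subtype]

lemma card_fixedFun (π : Equiv.Perm α) :
    Fintype.card {f : α → ZMod 2 // ∀ x, f (π x) = f x} = 2 ^ numCycles π := by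
  have key : ∀ (f : α → ZMod 2), (∀ x, f (π x) = f x) → ∀ x y, π.SameCycle x y → f x = f y := by
    intro f hf x y ⟨i, hi⟩
    have hn : ∀ (n : ℕ) (z : α), f ((π ^ n) z) = f z := by
      intro n
      induction n with
      | zero => simp
      | succ k ih => intro z; rw [pow_succ, Equiv.Perm.mul_apply, ih, hf]
    have hz : ∀ (n : ℤ) (z : α), f ((π ^ n) z) = f z := by
      intro n z
      cases n with
      | ofNat k => exact hn k z
      | negSucc k =>
        have h1 : ((π ^ (k+1)) ((π ^ Int.negSucc k) z)) = z := by
          rw [zpow_negSucc]; exact Equiv.apply_symm_apply _ z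
        have h2 := hn (k+1) ((π ^ Int.negSucc k) z)
        rw [h1] at h2; exact h2.symm
    rw [← hi, hz]
  have e : {f : α → ZMod 2 // ∀ x, f (π x) = f x} ≃ (Quotient (orbitSetoid π) → ZMod 2) := by
    refine ⟨fun f => Quotient.lift f.1 (fun x y h => key f.1 f.2 x y h),
      fun g => ⟨fun x => g (Quotient.mk _ x), fun x =>
        congrArg g (@Quotient.sound _ (orbitSetoid π) _ _ ?_)⟩,
      fun f => by ext x; rfl, fun g => by ext ⟨x⟩; rfl⟩
    exact sameCycle_apply_left.2 (SameCycle.refl _ _)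
  rw [Fintype.card_congr e, Fintype.card_fun, ZMod.card, card_orbits]

end OrbitCount

section Helpers
variable {M : Type*}

lemma ite_lt_succ [AddZeroClass M] (a v : ℕ) (t : M) :
    (if a < v + 1 then t else 0) = (if a < v then t else 0) + (if a = v then t else 0) := by
  by_cases h1 : a < v
  · rw [if_pos (Nat.lt_succ_of_lt h1), if_pos h1, if_neg (by omega), add_zero]
  · by_cases h2 : a = v
    · rw [if_pos (by omega), if_neg h1, if_pos h2, zero_add]
    · rw [if_neg (by omega), if_neg h1, if_neg h2, add_zero]

lemma ite_top_split (a v : ℕ) (t : ZMod 2) (ha : a ≤ v) :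
    (if a < v then t else 0) + (if a = v then t else 0) = t := by
  by_cases h1 : a < v
  · rw [if_pos h1, if_neg (by omega), add_zero]
  · rw [if_neg h1, if_pos (by omega), zero_add]

lemma ite_interval (a p q : ℕ) (t : ZMod 2) (hpq : p ≤ q) :
    (if a < q then t else 0) + (if a < p then t else 0)
      = (if p ≤ a ∧ a < q then t else 0) := by
  by_cases h1 : a < p
  · rw [if_pos h1, if_pos (lt_of_lt_of_le h1 hpq), if_neg (by omega), CharTwo.add_self_eq_zero]
  · by_cases h2 : a < q
    · rw [if_pos h2, if_neg h1, if_pos (by omega), add_zero]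
    · rw [if_neg h2, if_neg h1, if_neg (by omega), add_zero]

end Helpers

section Main
variable {N : ℕ} [NeZero N] {m : Equiv.Perm (Fin N)}

/-- The jump function of weights `t` on chords of `S`. -/
def jmp (S : Finset (ChordIdx N m)) (t : {i // i ∈ S} → ZMod 2) (x : Fin N) : ZMod 2 :=
  ∑ k ∈ S.attach, ((if (k.1.1 : ℕ) = (x : ℕ) then t k else 0)
    + (if ((m k.1.1 : Fin N) : ℕ) = (x : ℕ) then t k else 0))

/-- The candidate fixed function built from chord weights `t` and constant `c`. -/
def Fc (S : Finset (ChordIdx N m)) (t : {i // i ∈ S} → ZMod 2) (c : ZMod 2) (y : Fin N) : ZMod 2 :=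
  c + ∑ k ∈ S.attach, ((if (k.1.1 : ℕ) < (y : ℕ) then t k else 0)
    + (if ((m k.1.1 : Fin N) : ℕ) < (y : ℕ) then t k else 0))

lemma two_le_N (hfree : ∀ x, m x ≠ x) : 2 ≤ N := by
  rcases Nat.lt_or_ge N 2 with h | h
  · interval_cases N
    · exact absurd rfl (NeZero.ne 0)
    · exact absurd (Subsingleton.elim (m 0) 0) (hfree 0)
  · exact h

lemma fin_add_one_val (x : Fin N) (h : (x : ℕ) + 1 < N) :
    ((x + 1 : Fin N) : ℕ) = (x : ℕ) + 1 := by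
  obtain ⟨n, rfl⟩ : ∃ n, N = n + 1 := ⟨N - 1, by have := NeZero.ne N; omega⟩
  rw [Fin.val_add_one, if_neg]
  intro he
  rw [he] at h
  simp [Fin.last] at h

lemma fin_add_one_val_top (x : Fin N) (h : ¬ ((x : ℕ) + 1 < N)) :
    ((x + 1 : Fin N) : ℕ) = 0 := by
  obtain ⟨n, rfl⟩ : ∃ n, N = n + 1 := ⟨N - 1, by have := NeZero.ne N; omega⟩
  rw [Fin.val_add_one, if_pos]
  have := x.isLt
  exact Fin.ext (by simp [Fin.last]; omega)

lemma Fc_zero (S : Finset (ChordIdx N m)) (t : {i // i ∈ S} → ZMod 2) (c : ZMod 2) :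
    Fc S t c 0 = c := by
  unfold Fc
  rw [Finset.sum_eq_zero, add_zero]
  intro k _
  rw [if_neg (by simp), if_neg (by simp), add_zero]

lemma Fc_step (S : Finset (ChordIdx N m))
    (t : {i // i ∈ S} → ZMod 2) (c : ZMod 2) (x : Fin N) :
    Fc S t c (x + 1) = Fc S t c x + jmp S t x := by
  by_cases h : (x : ℕ) + 1 < N
  · unfold Fc jmp
    rw [add_assoc, ← Finset.sum_add_distrib]
    congr 1
    apply Finset.sum_congr rfl
    intro k _
    rw [fin_add_one_val x h, ite_lt_succ, ite_lt_succ]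
    ring
  · unfold Fc jmp
    have hx : (x : ℕ) = N - 1 := by have := x.isLt; omega
    rw [fin_add_one_val_top x h]
    have hz : ∀ k ∈ S.attach,
        (((if (k.1.1 : ℕ) < (x : ℕ) then t k else 0)
          + (if ((m k.1.1 : Fin N) : ℕ) < (x : ℕ) then t k else 0))
        + ((if (k.1.1 : ℕ) = (x : ℕ) then t k else 0)
          + (if ((m k.1.1 : Fin N) : ℕ) = (x : ℕ) then t k else 0))) = 0 := by
      intro k _
      have e1 : (if (k.1.1 : ℕ) < (x : ℕ) then t k else 0)
          + (if (k.1.1 : ℕ) = (x : ℕ) then t k else 0) = t k :=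
        ite_top_split _ _ _ (by have := k.1.1.isLt; omega)
      have e2 : (if ((m k.1.1 : Fin N) : ℕ) < (x : ℕ) then t k else 0)
          + (if ((m k.1.1 : Fin N) : ℕ) = (x : ℕ) then t k else 0) = t k :=
        ite_top_split _ _ _ (by have := (m k.1.1).isLt; omega)
      calc _ = ((if (k.1.1 : ℕ) < (x : ℕ) then t k else 0)
          + (if (k.1.1 : ℕ) = (x : ℕ) then t k else 0))
          + ((if ((m k.1.1 : Fin N) : ℕ) < (x : ℕ) then t k else 0)
          + (if ((m k.1.1 : Fin N) : ℕ) = (x : ℕ) then t k else 0)) := by ring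
        _ = t k + t k := by rw [e1, e2]
        _ = 0 := CharTwo.add_self_eq_zero _
    rw [add_assoc, ← Finset.sum_add_distrib, Finset.sum_congr rfl hz, Finset.sum_const_zero,
      add_zero]
    simp

lemma linkedChord_irrefl (i : ChordIdx N m) : ¬ LinkedChord N m i i := by
  unfold LinkedChord Linked
  omega

/-- Distinct chords have disjoint endpoint sets. -/
lemma endpoints_disjoint (hinv : ∀ x, m (m x) = x) {k i : ChordIdx N m} (hne : k ≠ i) :
    (k.1 : ℕ) ≠ (i.1 : ℕ) ∧ (k.1 : ℕ) ≠ ((m i.1 : Fin N) : ℕ)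
      ∧ ((m k.1 : Fin N) : ℕ) ≠ (i.1 : ℕ) ∧ ((m k.1 : Fin N) : ℕ) ≠ ((m i.1 : Fin N) : ℕ) := by
  refine ⟨?_, ?_, ?_, ?_⟩
  · intro h
    exact hne (Subtype.ext (Fin.ext h))
  · intro h
    have hk : k.1 = m i.1 := Fin.ext h
    have := k.2
    rw [hk, hinv] at this
    exact absurd i.2 (by omega)
  · intro h
    have hk : m k.1 = i.1 := Fin.ext h
    have := k.2
    rw [hk] at this
    have hki : k.1 = m i.1 := by rw [← hk, hinv]
    rw [hki] at this
    exact absurd i.2 (by omega)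
  · intro h
    have hk : m k.1 = m i.1 := Fin.ext h
    exact hne (Subtype.ext (m.injective hk))

lemma Fc_pair (hinv : ∀ x, m (m x) = x) (S : Finset (ChordIdx N m))
    (t : {i // i ∈ S} → ZMod 2) (c : ZMod 2) (i : {i // i ∈ S}) :
    Fc S t c (m i.1.1) + Fc S t c i.1.1
      = t i + ∑ k ∈ S.attach, (if LinkedChord N m k.1 i.1 then t k else 0) := by
  set p : ℕ := (i.1.1 : ℕ) with hp
  set q : ℕ := ((m i.1.1 : Fin N) : ℕ) with hq
  have hpq : p < q := i.1.2
  unfold Fc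
  have key : ∀ k ∈ S.attach,
      (((if (k.1.1 : ℕ) < q then t k else 0) + (if ((m k.1.1 : Fin N) : ℕ) < q then t k else 0))
      + ((if (k.1.1 : ℕ) < p then t k else 0) + (if ((m k.1.1 : Fin N) : ℕ) < p then t k else 0)))
      = (if k = i then t k else 0) + (if LinkedChord N m k.1 i.1 then t k else 0) := by
    intro k _
    have hab : (k.1.1 : ℕ) < ((m k.1.1 : Fin N) : ℕ) := k.1.2
    have e1 : (if (k.1.1 : ℕ) < q then t k else 0) + (if (k.1.1 : ℕ) < p then t k else 0)
        = (if p ≤ (k.1.1 : ℕ) ∧ (k.1.1 : ℕ) < q then t k else 0) :=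
      ite_interval _ p q (t k) (le_of_lt hpq)
    have e2 : (if ((m k.1.1 : Fin N) : ℕ) < q then t k else 0)
          + (if ((m k.1.1 : Fin N) : ℕ) < p then t k else 0)
        = (if p ≤ ((m k.1.1 : Fin N) : ℕ) ∧ ((m k.1.1 : Fin N) : ℕ) < q then t k else 0) :=
      ite_interval _ p q (t k) (le_of_lt hpq)
    have lhs_eq : (((if (k.1.1 : ℕ) < q then t k else 0)
          + (if ((m k.1.1 : Fin N) : ℕ) < q then t k else 0))
        + ((if (k.1.1 : ℕ) < p then t k else 0)
          + (if ((m k.1.1 : Fin N) : ℕ) < p then t k else 0)))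
        = (if p ≤ (k.1.1 : ℕ) ∧ (k.1.1 : ℕ) < q then t k else 0)
          + (if p ≤ ((m k.1.1 : Fin N) : ℕ) ∧ ((m k.1.1 : Fin N) : ℕ) < q then t k else 0) := by
      rw [← e1, ← e2]; ring
    rw [lhs_eq]
    have hL : LinkedChord N m k.1 i.1 ↔
        ((k.1.1 : ℕ) < p ∧ p < ((m k.1.1 : Fin N) : ℕ) ∧ ((m k.1.1 : Fin N) : ℕ) < q)
        ∨ (p < (k.1.1 : ℕ) ∧ (k.1.1 : ℕ) < q ∧ q < ((m k.1.1 : Fin N) : ℕ)) := Iff.rfl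
    by_cases hki : k = i
    · subst hki
      rw [if_pos (by omega : p ≤ (k.1.1 : ℕ) ∧ (k.1.1 : ℕ) < q),
        if_neg (by omega : ¬ (p ≤ ((m k.1.1 : Fin N) : ℕ) ∧ ((m k.1.1 : Fin N) : ℕ) < q)),
        if_pos rfl, if_neg (by rw [hL]; omega)]
    · obtain ⟨d1, d2, d3, d4⟩ := endpoints_disjoint hinv (fun h => hki (Subtype.ext h))
      rw [if_neg hki, zero_add]
      by_cases hA : p ≤ (k.1.1 : ℕ) ∧ (k.1.1 : ℕ) < q <;>
        by_cases hB : p ≤ ((m k.1.1 : Fin N) : ℕ) ∧ ((m k.1.1 : Fin N) : ℕ) < q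
      · rw [if_pos hA, if_pos hB, if_neg (by rw [hL]; omega), CharTwo.add_self_eq_zero]
      · rw [if_pos hA, if_neg hB, if_pos (by rw [hL]; omega), add_zero]
      · rw [if_neg hA, if_pos hB, if_pos (by rw [hL]; omega), zero_add]
      · rw [if_neg hA, if_neg hB, if_neg (by rw [hL]; omega), add_zero]
  calc (c + ∑ k ∈ S.attach, ((if (k.1.1 : ℕ) < q then t k else 0)
          + (if ((m k.1.1 : Fin N) : ℕ) < q then t k else 0)))
      + (c + ∑ k ∈ S.attach, ((if (k.1.1 : ℕ) < p then t k else 0)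
          + (if ((m k.1.1 : Fin N) : ℕ) < p then t k else 0)))
      = ∑ k ∈ S.attach,
          (((if (k.1.1 : ℕ) < q then t k else 0) + (if ((m k.1.1 : Fin N) : ℕ) < q then t k else 0))
          + ((if (k.1.1 : ℕ) < p then t k else 0)
            + (if ((m k.1.1 : Fin N) : ℕ) < p then t k else 0))) := by
        have hd := Finset.sum_add_distrib (s := S.attach)
          (f := fun k => ((if (k.1.1 : ℕ) < q then t k else 0)
            + (if ((m k.1.1 : Fin N) : ℕ) < q then t k else 0)))
          (g := fun k => ((if (k.1.1 : ℕ) < p then t k else 0)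
            + (if ((m k.1.1 : Fin N) : ℕ) < p then t k else 0)))
        rw [hd]
        have hc : ∀ A B : ZMod 2, c + A + (c + B) = (c + c) + (A + B) := by intros; ring
        rw [hc, CharTwo.add_self_eq_zero, zero_add]
    _ = ∑ k ∈ S.attach, ((if k = i then t k else 0) + (if LinkedChord N m k.1 i.1 then t k else 0)) :=
        Finset.sum_congr rfl key
    _ = t i + ∑ k ∈ S.attach, (if LinkedChord N m k.1 i.1 then t k else 0) := by
        rw [Finset.sum_add_distrib, Finset.sum_ite_eq' S.attach i t, if_pos (Finset.mem_attach _ _)]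


lemma zmod2_aux (u v : ZMod 2) : v + (u + v) = u := by
  have h : v + (u + v) = u + (v + v) := by ring
  rw [h, CharTwo.add_self_eq_zero, add_zero]

lemma zmod2_aux3 (u v : ZMod 2) : v + (v + u) = u := by
  have h : v + (v + u) = u + (v + v) := by ring
  rw [h, CharTwo.add_self_eq_zero, add_zero]

lemma zmod2_aux2 {A B t : ZMod 2} (h : A + B = t) : A + t = B := by
  rw [← h]
  have h2 : A + (A + B) = (A + A) + B := by ring
  rw [h2, CharTwo.add_self_eq_zero, zero_add]

lemma jmp_not_endpoint (S : Finset (ChordIdx N m)) (t : {i // i ∈ S} → ZMod 2) (x : Fin N)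
    (hx : ¬ ∃ i ∈ S, (i : Fin N) = x ∨ m (i : Fin N) = x) : jmp S t x = 0 := by
  unfold jmp
  apply Finset.sum_eq_zero
  intro k _
  rw [if_neg, if_neg, add_zero]
  · intro h
    exact hx ⟨k.1, k.2, Or.inr (Fin.ext h)⟩
  · intro h
    exact hx ⟨k.1, k.2, Or.inl (Fin.ext h)⟩

lemma jmp_endpoint (hinv : ∀ x, m (m x) = x) (S : Finset (ChordIdx N m))
    (t : {i // i ∈ S} → ZMod 2) (i : ChordIdx N m) (hi : i ∈ S) :
    jmp S t i.1 = t ⟨i, hi⟩ ∧ jmp S t (m i.1) = t ⟨i, hi⟩ := by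
  have hlt : (i.1 : ℕ) < ((m i.1 : Fin N) : ℕ) := i.2
  constructor
  · unfold jmp
    rw [Finset.sum_congr rfl (g := fun k => if k = ⟨i, hi⟩ then t k else 0) ?_,
      Finset.sum_ite_eq' S.attach ⟨i, hi⟩ t, if_pos (Finset.mem_attach _ _)]
    intro k _
    by_cases hk : k = ⟨i, hi⟩
    · subst hk
      have hne : ¬ (((m i.1 : Fin N) : ℕ) = ((i.1 : Fin N) : ℕ)) := by omega
      simp [hne]
    · obtain ⟨d1, d2, d3, d4⟩ := endpoints_disjoint hinv
        (fun h => hk (Subtype.ext h) : k.1 ≠ i)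
      simp [hk, d1, d3]
  · unfold jmp
    rw [Finset.sum_congr rfl (g := fun k => if k = ⟨i, hi⟩ then t k else 0) ?_,
      Finset.sum_ite_eq' S.attach ⟨i, hi⟩ t, if_pos (Finset.mem_attach _ _)]
    intro k _
    by_cases hk : k = ⟨i, hi⟩
    · subst hk
      have hne : ¬ (((i.1 : Fin N) : ℕ) = ((m i.1 : Fin N) : ℕ)) := by omega
      simp [hne]
    · obtain ⟨d1, d2, d3, d4⟩ := endpoints_disjoint hinv
        (fun h => hk (Subtype.ext h) : k.1 ≠ i)
      simp [hk, d2, d4]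


lemma smoothSet_apply (hinv : ∀ x, m (m x) = x) (S : Finset (ChordIdx N m)) (x : Fin N) :
    smoothSet N m hinv S x
      = 1 + (if ∃ i ∈ S, (i : Fin N) = x ∨ m (i : Fin N) = x then m x else x) := rfl

/-- The weights extracted from a fixed function. -/
def wt (S : Finset (ChordIdx N m)) (f : Fin N → ZMod 2) (k : {i // i ∈ S}) : ZMod 2 :=
  f (k.1.1 + 1) + f k.1.1

section Fixed
variable (hinv : ∀ x, m (m x) = x) (S : Finset (ChordIdx N m)) (f : Fin N → ZMod 2)
  (hf : ∀ x, f (smoothSet N m hinv S x) = f x)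
include hf

lemma fixed_nonendpoint (x : Fin N) (hx : ¬ ∃ i ∈ S, (i : Fin N) = x ∨ m (i : Fin N) = x) :
    f (x + 1) = f x := by
  have := hf x
  rw [smoothSet_apply, if_neg hx, add_comm 1 x] at this
  exact this

lemma fixed_endpoint (i : ChordIdx N m) (hi : i ∈ S) :
    f ((m i.1 : Fin N) + 1) = f i.1 ∧ f (i.1 + 1) = f (m i.1) := by
  constructor
  · have := hf i.1
    rw [smoothSet_apply, if_pos ⟨i, hi, Or.inl rfl⟩, add_comm 1 (m i.1)] at this
    exact this
  · have := hf (m i.1)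
    rw [smoothSet_apply, if_pos ⟨i, hi, Or.inr rfl⟩, hinv, add_comm 1 (i.1 : Fin N)] at this
    exact this

lemma fixed_step (x : Fin N) : f (x + 1) = f x + jmp S (wt S f) x := by
  by_cases hx : ∃ i ∈ S, (i : Fin N) = x ∨ m (i : Fin N) = x
  · obtain ⟨i, hi, hcase⟩ := hx
    rcases hcase with e | e
    · subst e
      rw [(jmp_endpoint hinv S (wt S f) i hi).1]
      show f (i.1 + 1) = f i.1 + (f (i.1 + 1) + f i.1)
      rw [zmod2_aux]
    · subst e
      rw [(jmp_endpoint hinv S (wt S f) i hi).2]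
      show f ((m i.1 : Fin N) + 1) = f (m i.1) + (f (i.1 + 1) + f i.1)
      rw [(fixed_endpoint hinv S f hf i hi).1, (fixed_endpoint hinv S f hf i hi).2]
      exact (zmod2_aux3 _ _).symm
  · rw [jmp_not_endpoint S _ x hx, add_zero]
    exact fixed_nonendpoint hinv S f hf x hx

lemma fixed_eq_Fc : ∀ y, f y = Fc S (wt S f) (f 0) y := by
  have main : ∀ v (hv : v < N), f ⟨v, hv⟩ = Fc S (wt S f) (f 0) ⟨v, hv⟩ := by
    intro v
    induction v with
    | zero =>
      intro hv
      have h0 : (⟨0, hv⟩ : Fin N) = 0 := Fin.ext (by simp)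
      rw [h0, Fc_zero]
    | succ w ih =>
      intro hv
      have hwN : w < N := by omega
      have hx : (⟨w, hwN⟩ : Fin N) + 1 = ⟨w + 1, hv⟩ :=
        Fin.ext (by rw [fin_add_one_val ⟨w, hwN⟩ hv])
      rw [← hx, fixed_step hinv S f hf, Fc_step, ih hwN]
  intro y
  have := main y.val y.isLt
  simpa using this

lemma fixed_cond (i : {i // i ∈ S}) :
    ∑ k ∈ S.attach, (if LinkedChord N m k.1 i.1 then wt S f k else 0) = 0 := by
  have hpair := Fc_pair hinv S (wt S f) (f 0) i
  have hq : f (m i.1.1) = Fc S (wt S f) (f 0) (m i.1.1) := fixed_eq_Fc hinv S f hf _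
  have hp : f i.1.1 = Fc S (wt S f) (f 0) i.1.1 := fixed_eq_Fc hinv S f hf _
  have hfp : f (m i.1.1) + f i.1.1 = wt S f i := by
    show _ = f (i.1.1 + 1) + f i.1.1
    rw [(fixed_endpoint hinv S f hf i.1 i.2).2]
  rw [hq, hp, hpair] at hfp
  have h2 : wt S f i + ∑ k ∈ S.attach, (if LinkedChord N m k.1 i.1 then wt S f k else 0)
      = wt S f i + 0 := by rw [hfp, add_zero]
  exact add_left_cancel h2

end Fixed

lemma Fc_fixed (hinv : ∀ x, m (m x) = x) (S : Finset (ChordIdx N m))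
    (t : {i // i ∈ S} → ZMod 2) (c : ZMod 2)
    (hcond : ∀ i : {i // i ∈ S},
      ∑ k ∈ S.attach, (if LinkedChord N m k.1 i.1 then t k else 0) = 0)
    (x : Fin N) : Fc S t c (smoothSet N m hinv S x) = Fc S t c x := by
  rw [smoothSet_apply]
  by_cases hx : ∃ i ∈ S, (i : Fin N) = x ∨ m (i : Fin N) = x
  · rw [if_pos hx]
    obtain ⟨i, hi, hcase⟩ := hx
    have hpair := Fc_pair hinv S t c ⟨i, hi⟩
    rw [hcond ⟨i, hi⟩, add_zero] at hpair
    have hpairE : Fc S t c (m i.1) + Fc S t c i.1 = t ⟨i, hi⟩ := hpair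
    rcases hcase with e | e
    · subst e
      rw [add_comm 1 (m i.1), Fc_step S t c, (jmp_endpoint hinv S t i hi).2]
      exact zmod2_aux2 hpairE
    · subst e
      rw [hinv, add_comm 1 (i.1 : Fin N), Fc_step S t c, (jmp_endpoint hinv S t i hi).1]
      have hpair' : Fc S t c i.1 + Fc S t c (m i.1) = t ⟨i, hi⟩ := by
        rw [add_comm]; exact hpairE
      exact zmod2_aux2 hpair'
  · rw [if_neg hx, add_comm 1 x, Fc_step S t c, jmp_not_endpoint S t x hx, add_zero]


/-- The space of fixed functions is parametrized by the initial value and the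
weights in the kernel of the interlacement form. -/
def fixEquiv (hinv : ∀ x, m (m x) = x) (S : Finset (ChordIdx N m)) :
    {f : Fin N → ZMod 2 // ∀ x, f (smoothSet N m hinv S x) = f x}
      ≃ ZMod 2 × {t : {i // i ∈ S} → ZMod 2 //
          ∀ i : {i // i ∈ S},
            ∑ k ∈ S.attach, (if LinkedChord N m k.1 i.1 then t k else 0) = 0} where
  toFun f := (f.1 0, ⟨wt S f.1, fun i => fixed_cond hinv S f.1 f.2 i⟩)
  invFun ct := ⟨Fc S ct.2.1 ct.1, fun x => Fc_fixed hinv S ct.2.1 ct.1 ct.2.2 x⟩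
  left_inv f := Subtype.ext (funext fun y => (fixed_eq_Fc hinv S f.1 f.2 y).symm)
  right_inv ct := by
    obtain ⟨c, t, ht⟩ := ct
    refine Prod.ext (Fc_zero S t c) (Subtype.ext (funext fun i => ?_))
    show Fc S t c (i.1.1 + 1) + Fc S t c i.1.1 = t i
    rw [Fc_step S t c, (jmp_endpoint hinv S t i.1 i.2).1]
    have h2 : (Fc S t c i.1.1 + t ⟨i.1, i.2⟩) + Fc S t c i.1.1
        = t ⟨i.1, i.2⟩ + (Fc S t c i.1.1 + Fc S t c i.1.1) := by ring
    rw [h2, CharTwo.add_self_eq_zero, add_zero]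

lemma card_fix (hinv : ∀ x, m (m x) = x) (S : Finset (ChordIdx N m)) :
    Fintype.card {f : Fin N → ZMod 2 // ∀ x, f (smoothSet N m hinv S x) = f x}
      = 2 * Fintype.card {t : {i // i ∈ S} → ZMod 2 //
          ∀ i : {i // i ∈ S},
            ∑ k ∈ S.attach, (if LinkedChord N m k.1 i.1 then t k else 0) = 0} := by
  rw [Fintype.card_congr (fixEquiv hinv S), Fintype.card_prod]
  congr 1

end Main

section Transport
variable {N N' : ℕ} [NeZero N] [NeZero N'] {m : Equiv.Perm (Fin N)} {m' : Equiv.Perm (Fin N')}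

def chordEquiv (φ : ChordIdx N m ≃ ChordIdx N' m') (S : Finset (ChordIdx N m)) :
    {i // i ∈ S} ≃ {j // j ∈ S.image φ} where
  toFun i := ⟨φ i.1, Finset.mem_image_of_mem φ i.2⟩
  invFun j := ⟨φ.symm j.1, by
    obtain ⟨a, ha, he⟩ := Finset.mem_image.1 j.2
    rw [← he, Equiv.symm_apply_apply]; exact ha⟩
  left_inv i := Subtype.ext (φ.symm_apply_apply i.1)
  right_inv j := Subtype.ext (φ.apply_symm_apply j.1)

lemma cond_transport (φ : ChordIdx N m ≃ ChordIdx N' m')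
    (hφ : ∀ i j, LinkedChord N m i j ↔ LinkedChord N' m' (φ i) (φ j))
    (S : Finset (ChordIdx N m)) (t : {i // i ∈ S} → ZMod 2) (j : {j // j ∈ S.image φ}) :
    ∑ k ∈ (S.image φ).attach,
        (if LinkedChord N' m' k.1 j.1 then t ((chordEquiv φ S).symm k) else 0)
      = ∑ k ∈ S.attach,
        (if LinkedChord N m k.1 ((chordEquiv φ S).symm j).1 then t k else 0) := by
  rw [← Finset.univ_eq_attach, ← Finset.univ_eq_attach]
  refine (Fintype.sum_equiv (chordEquiv φ S)
    (fun k => if LinkedChord N m k.1 ((chordEquiv φ S).symm j).1 then t k else 0)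
    (fun k => if LinkedChord N' m' k.1 j.1 then t ((chordEquiv φ S).symm k) else 0) ?_).symm
  intro k
  have hj : (j.1 : ChordIdx N' m') = φ ((chordEquiv φ S).symm j).1 :=
    (φ.apply_symm_apply j.1).symm
  have hiff : LinkedChord N m k.1 ((chordEquiv φ S).symm j).1
      ↔ LinkedChord N' m' ((chordEquiv φ S) k).1 j.1 := by
    rw [hj]
    exact hφ k.1 ((chordEquiv φ S).symm j).1
  have hval : t ((chordEquiv φ S).symm ((chordEquiv φ S) k)) = t k := by
    rw [Equiv.symm_apply_apply]
  try dsimp only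
  rw [if_congr hiff rfl rfl, hval]

def condEquiv (φ : ChordIdx N m ≃ ChordIdx N' m')
    (hφ : ∀ i j, LinkedChord N m i j ↔ LinkedChord N' m' (φ i) (φ j))
    (S : Finset (ChordIdx N m)) :
    {t : {i // i ∈ S} → ZMod 2 //
      ∀ i : {i // i ∈ S},
        ∑ k ∈ S.attach, (if LinkedChord N m k.1 i.1 then t k else 0) = 0}
    ≃ {t : {j // j ∈ S.image φ} → ZMod 2 //
      ∀ j : {j // j ∈ S.image φ},
        ∑ k ∈ (S.image φ).attach, (if LinkedChord N' m' k.1 j.1 then t k else 0) = 0} where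
  toFun t := ⟨fun j => t.1 ((chordEquiv φ S).symm j), fun j => by
    rw [cond_transport φ hφ S t.1 j]
    exact t.2 _⟩
  invFun t := ⟨fun i => t.1 (chordEquiv φ S i), fun i => by
    have h := cond_transport φ hφ S (fun k => t.1 (chordEquiv φ S k)) (chordEquiv φ S i)
    simp only [Equiv.symm_apply_apply, Equiv.apply_symm_apply] at h
    rw [← h]
    exact t.2 (chordEquiv φ S i)⟩
  left_inv t := Subtype.ext (funext fun i => by simp)
  right_inv t := Subtype.ext (funext fun j => by simp)

end Transport

/-- If two chord diagrams (given by fixed-point-free involutions `m`, `m'` of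
the points of a circle) have isomorphic intersection graphs via a bijection
`φ` of their chords, then for any subset `S` of chords, smoothing all chords of
`S` in the first diagram and all chords of `φ(S)` in the second yields
1-manifolds with the same number of circle components. -/
theorem stmt_19 (N N' : ℕ) [NeZero N] [NeZero N']
    (m : Equiv.Perm (Fin N)) (m' : Equiv.Perm (Fin N'))
    (hinv : ∀ x, m (m x) = x) (hfree : ∀ x, m x ≠ x)
    (hinv' : ∀ x, m' (m' x) = x) (hfree' : ∀ x, m' x ≠ x)
    (φ : ChordIdx N m ≃ ChordIdx N' m')
    (hφ : ∀ i j, LinkedChord N m i j ↔ LinkedChord N' m' (φ i) (φ j))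
    (S : Finset (ChordIdx N m)) :
    numCycles (smoothSet N m hinv S) = numCycles (smoothSet N' m' hinv' (S.image φ)) := by
  have h1 := card_fixedFun (smoothSet N m hinv S)
  have h2 := card_fixedFun (smoothSet N' m' hinv' (S.image φ))
  have h3 := card_fix hinv S
  have h4 := card_fix hinv' (S.image φ)
  have h5 : Fintype.card {t : {i // i ∈ S} → ZMod 2 //
        ∀ i : {i // i ∈ S},
          ∑ k ∈ S.attach, (if LinkedChord N m k.1 i.1 then t k else 0) = 0}
      = Fintype.card {t : {j // j ∈ S.image φ} → ZMod 2 //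
        ∀ j : {j // j ∈ S.image φ},
          ∑ k ∈ (S.image φ).attach, (if LinkedChord N' m' k.1 j.1 then t k else 0) = 0} :=
    Fintype.card_congr (condEquiv φ hφ S)
  have key : (2 : ℕ) ^ numCycles (smoothSet N m hinv S)
      = 2 ^ numCycles (smoothSet N' m' hinv' (S.image φ)) :=
    calc (2 : ℕ) ^ numCycles (smoothSet N m hinv S)
        = _ := h1.symm
      _ = _ := fintypeCard_indep _ _
      _ = _ := h3
      _ = _ := by rw [h5]
      _ = _ := h4.symm
      _ = _ := fintypeCard_indep _ _
      _ = _ := h2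
  exact Nat.pow_right_injective (le_refl 2) key
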